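/- Let R = ℤ[ε,a]/(ε²−1, (1+ε)a, (a−(1−ε))²(a+(1−ε))), and consider the 2-valued series F_t(x,y) = 1 + (1−ε)(x+y)t + (−ε(x²+y²) + axy)t² over R. In the ring A = R[x,y,z][S]/(S² − (1−ε)(x+y)S + (−ε(x²+y²)+axy)), with S' := (1−ε)(x+y) − S, the following identity holds in A[t]: (1 + (1−ε)(S+z)t + (−ε(S²+z²)+aSz)t²)·(1 + (1−ε)(S'+z)t + (−ε(S'²+z²)+aS'z)t²) = 1 + 2(1−ε)(x+y+z)t + [2(1−2ε)(x²+y²+z²) + (a+4)(1−ε)(xy+xz+yz)]t² + [2(1−ε)(x³+y³+z³) + 2(1−ε)(1+a)(x²y+x²z+y²x+y²z+z²x+z²y) + 2(1−ε)(a²−a+4)xyz]t³ + [(x⁴+y⁴+z⁴) + 2a(x³y+x³z+y³x+y³z+z³x+z³y) + (2+a²)(x²y²+x²z²+y²z²) + 2(a²+a)(x²yz+xy²z+xyz²)]t⁴. -/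

import Mathlib

noncomputable section

open MvPolynomial

/-- The ideal `(ε²−1, (1+ε)a, (a−(1−ε))²(a+(1−ε)))` of `ℤ[ε,a]`, with `ε = X 0`, `a = X 1`. -/
def I19 : Ideal (MvPolynomial (Fin 2) ℤ) :=
  Ideal.span {(X 0 : MvPolynomial (Fin 2) ℤ) ^ 2 - 1,
    (1 + (X 0 : MvPolynomial (Fin 2) ℤ)) * X 1,
    ((X 1 : MvPolynomial (Fin 2) ℤ) - (1 - X 0)) ^ 2 * (X 1 + (1 - X 0))}

/-- The base ring `R = ℤ[ε,a]/(ε²−1, (1+ε)a, (a−(1−ε))²(a+(1−ε)))`. -/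
abbrev R19 : Type := MvPolynomial (Fin 2) ℤ ⧸ I19

/-- The class of `ε` in `R`. -/
def εR : R19 := Ideal.Quotient.mk I19 (X 0)

/-- The class of `a` in `R`. -/
def aR : R19 := Ideal.Quotient.mk I19 (X 1)

/-- The polynomial ring `R[x,y,z]`. -/
abbrev B19 : Type := MvPolynomial (Fin 3) R19

instance instCommRingB19 : CommRing B19 := inferInstance

/-- `ε` as an element of `R[x,y,z]`. -/
def cε : B19 := C εR

/-- `a` as an element of `R[x,y,z]`. -/
def ca : B19 := C aR

/-- `x`. -/
def x19 : B19 := X 0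

/-- `y`. -/
def y19 : B19 := X 1

/-- `z`. -/
def z19 : B19 := X 2

/-- `F₁(x,y) = (1−ε)(x+y)`, the coefficient of `t` in the 2-valued series. -/
def F1 : B19 := (1 - cε) * (x19 + y19)

/-- `F₂(x,y) = −ε(x²+y²) + a·x·y`, the coefficient of `t²` in the 2-valued series. -/
def F2 : B19 := -cε * (x19 ^ 2 + y19 ^ 2) + ca * x19 * y19

/-- The quadratic polynomial `S² − F₁(x,y)·S + F₂(x,y)` defining the universal splitting
algebra `A = R[x,y,z][S]/(S² − F₁S + F₂)`. -/
def q19 : Polynomial B19 :=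
  Polynomial.X ^ 2 - Polynomial.C F1 * Polynomial.X + Polynomial.C F2

/-- The first root `S` of the 2-valued series in the splitting algebra. -/
def S19 : AdjoinRoot q19 := AdjoinRoot.root q19

/-- The conjugate root `S' = F₁(x,y) − S`. -/
def S19' : AdjoinRoot q19 := AdjoinRoot.of q19 F1 - S19

/-- `ε` in the splitting algebra. -/
def εA : AdjoinRoot q19 := AdjoinRoot.of q19 cε

/-- `a` in the splitting algebra. -/
def aA : AdjoinRoot q19 := AdjoinRoot.of q19 ca

/-- `z` in the splitting algebra. -/
def zA : AdjoinRoot q19 := AdjoinRoot.of q19 z19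

end

noncomputable section Aux

open MvPolynomial

/-- `x` in the splitting algebra. -/
def xA : AdjoinRoot q19 := AdjoinRoot.of q19 x19

/-- `y` in the splitting algebra. -/
def yA : AdjoinRoot q19 := AdjoinRoot.of q19 y19

/-- The composite ring hom `R19 → B19 → A`. -/
def φ19 : R19 →+* AdjoinRoot q19 := (AdjoinRoot.of q19).comp (MvPolynomial.C)

lemma εA_eq : εA = φ19 εR := rfl
lemma aA_eq : aA = φ19 aR := rfl

lemma hεR : εR ^ 2 = 1 := by
  have h : Ideal.Quotient.mk I19 ((X 0 : MvPolynomial (Fin 2) ℤ) ^ 2 - 1) = 0 :=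
    Ideal.Quotient.eq_zero_iff_mem.mpr (Ideal.subset_span (Set.mem_insert _ _))
  rw [map_sub, map_pow, map_one, sub_eq_zero] at h
  exact h

lemma haR : (1 + εR) * aR = 0 := by
  have h : Ideal.Quotient.mk I19 ((1 + (X 0 : MvPolynomial (Fin 2) ℤ)) * X 1) = 0 :=
    Ideal.Quotient.eq_zero_iff_mem.mpr
      (Ideal.subset_span (Set.mem_insert_of_mem _ (Set.mem_insert _ _)))
  rw [map_mul, map_add, map_one] at h
  exact h

lemma hcR : (aR - (1 - εR)) ^ 2 * (aR + (1 - εR)) = 0 := by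
  have h : Ideal.Quotient.mk I19
      (((X 1 : MvPolynomial (Fin 2) ℤ) - (1 - X 0)) ^ 2 * (X 1 + (1 - X 0))) = 0 :=
    Ideal.Quotient.eq_zero_iff_mem.mpr
      (Ideal.subset_span (Set.mem_insert_of_mem _ (Set.mem_insert_of_mem _ rfl)))
  simp only [map_mul, map_pow, map_sub, map_add, map_one] at h
  exact h

lemma hεA : εA ^ 2 = 1 := by rw [εA_eq, ← map_pow, hεR, map_one]

lemma haA : (1 + εA) * aA = 0 := by
  rw [εA_eq, aA_eq, ← map_one φ19, ← map_add, ← map_mul, haR, map_zero]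

lemma hcA : (aA - (1 - εA)) ^ 2 * (aA + (1 - εA)) = 0 := by
  rw [εA_eq, aA_eq, ← map_one φ19, ← map_sub, ← map_sub, ← map_pow, ← map_add, ← map_mul,
    hcR, map_zero]

lemma of_cε : AdjoinRoot.of q19 cε = εA := rfl
lemma of_ca : AdjoinRoot.of q19 ca = aA := rfl
lemma of_x : AdjoinRoot.of q19 x19 = xA := rfl
lemma of_y : AdjoinRoot.of q19 y19 = yA := rfl
lemma of_z : AdjoinRoot.of q19 z19 = zA := rfl

lemma ofF1 : AdjoinRoot.of q19 F1 = (1 - εA) * (xA + yA) := by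
  simp only [F1, map_mul, map_sub, map_add, map_one, of_cε, of_x, of_y]

lemma ofF2 : AdjoinRoot.of q19 F2 = -εA * (xA ^ 2 + yA ^ 2) + aA * xA * yA := by
  simp only [F2, map_mul, map_add, map_neg, map_pow, of_cε, of_ca, of_x, of_y]

lemma hq : S19 ^ 2 = (1 - εA) * (xA + yA) * S19 - (-εA * (xA ^ 2 + yA ^ 2) + aA * xA * yA) := by
  have h : AdjoinRoot.mk q19 (Polynomial.X ^ 2 - Polynomial.C F1 * Polynomial.X
      + Polynomial.C F2) = 0 := AdjoinRoot.mk_self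
  simp only [map_add, map_sub, map_mul, map_pow, AdjoinRoot.mk_X, AdjoinRoot.mk_C,
    ofF1, ofF2] at h
  unfold S19
  linear_combination h

lemma hs' : S19' = (1 - εA) * (xA + yA) - S19 := by
  unfold S19'
  rw [ofF1]

lemma A1 : (1 - εA) * (S19 + zA) + (1 - εA) * (S19' + zA)
    = AdjoinRoot.of q19 (2 * (1 - cε) * (x19 + y19 + z19)) := by
  rw [hs']
  simp only [map_mul, map_add, map_sub, map_one, map_ofNat, of_cε, of_x, of_y, of_z]
  linear_combination (xA + yA) * hεA

lemma A2 : (1 - εA) * (S19 + zA) * ((1 - εA) * (S19' + zA))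
      + (-εA * (S19 ^ 2 + zA ^ 2) + aA * S19 * zA)
      + (-εA * (S19' ^ 2 + zA ^ 2) + aA * S19' * zA)
    = AdjoinRoot.of q19 (2 * (1 - 2 * cε) * (x19 ^ 2 + y19 ^ 2 + z19 ^ 2)
          + (ca + 4) * (1 - cε) * (x19 * y19 + x19 * z19 + y19 * z19)) := by
  rw [hs']
  simp only [map_mul, map_add, map_sub, map_one, map_ofNat, map_pow, of_cε, of_ca, of_x,
    of_y, of_z]
  linear_combination ((-1) * εA^2 + (-1)) * hq + ((-2) * εA * xA^2 + (-2) * εA * xA * yA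
    + (-1) * εA * xA * zA + (-2) * εA * yA^2 + (-1) * εA * yA * zA + (1) * aA * xA * yA
    + (2) * xA^2 + (4) * xA * yA + (3) * xA * zA + (2) * yA^2 + (3) * yA * zA
    + (1) * zA^2) * hεA + ((1) * xA * yA) * haA

lemma A3 : (1 - εA) * (S19 + zA) * (-εA * (S19' ^ 2 + zA ^ 2) + aA * S19' * zA)
      + (1 - εA) * (S19' + zA) * (-εA * (S19 ^ 2 + zA ^ 2) + aA * S19 * zA)
    = AdjoinRoot.of q19 (2 * (1 - cε) * (x19 ^ 3 + y19 ^ 3 + z19 ^ 3)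
          + 2 * (1 - cε) * (1 + ca)
            * (x19 ^ 2 * y19 + x19 ^ 2 * z19 + y19 ^ 2 * x19 + y19 ^ 2 * z19
              + z19 ^ 2 * x19 + z19 ^ 2 * y19)
          + 2 * (1 - cε) * (ca ^ 2 - ca + 4) * (x19 * y19 * z19)) := by
  rw [hs']
  simp only [map_mul, map_add, map_sub, map_one, map_ofNat, map_pow, of_cε, of_ca, of_x,
    of_y, of_z]
  linear_combination ((1) * εA^3 * xA + (1) * εA^3 * yA + (-2) * εA^2 * xA + (-2) * εA^2 * yA
    + (2) * εA^2 * zA + (2) * εA * aA * zA + (1) * εA * xA + (1) * εA * yA + (-2) * εA * zA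
    + (-2) * aA * zA) * hq + ((1) * εA^2 * xA^3 + (1) * εA^2 * xA^2 * yA
    + (1) * εA^2 * xA^2 * zA + (1) * εA^2 * xA * yA^2 + (2) * εA^2 * xA * yA * zA
    + (1) * εA^2 * yA^3 + (1) * εA^2 * yA^2 * zA + (-1) * εA * aA * xA^2 * yA
    + (-1) * εA * aA * xA * yA^2 + (-2) * εA * xA^3 + (-2) * εA * xA^2 * yA
    + (-1) * εA * xA^2 * zA + (-2) * εA * xA * yA^2 + (-6) * εA * xA * yA * zA
    + (-1) * εA * xA * zA^2 + (-2) * εA * yA^3 + (-1) * εA * yA^2 * zA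
    + (-1) * εA * yA * zA^2 + (2) * aA * xA^2 * yA + (2) * aA * xA^2 * zA
    + (2) * aA * xA * yA^2 + (-2) * aA * xA * yA * zA + (1) * aA * xA * zA^2
    + (2) * aA * yA^2 * zA + (1) * aA * yA * zA^2 + (2) * xA^3 + (2) * xA^2 * yA
    + (2) * xA^2 * zA + (2) * xA * yA^2 + (8) * xA * yA * zA + (2) * xA * zA^2 + (2) * yA^3
    + (2) * yA^2 * zA + (2) * yA * zA^2 + (2) * zA^3) * hεA

lemma A4 : (-εA * (S19 ^ 2 + zA ^ 2) + aA * S19 * zA)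
      * (-εA * (S19' ^ 2 + zA ^ 2) + aA * S19' * zA)
    = AdjoinRoot.of q19 ((x19 ^ 4 + y19 ^ 4 + z19 ^ 4)
          + 2 * ca * (x19 ^ 3 * y19 + x19 ^ 3 * z19 + y19 ^ 3 * x19 + y19 ^ 3 * z19
              + z19 ^ 3 * x19 + z19 ^ 3 * y19)
          + (2 + ca ^ 2) * (x19 ^ 2 * y19 ^ 2 + x19 ^ 2 * z19 ^ 2 + y19 ^ 2 * z19 ^ 2)
          + 2 * (ca ^ 2 + ca)
            * (x19 ^ 2 * y19 * z19 + x19 * y19 ^ 2 * z19 + x19 * y19 * z19 ^ 2)) := by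
  rw [hs']
  simp only [map_mul, map_add, map_sub, map_one, map_ofNat, map_pow, of_cε, of_ca, of_x,
    of_y, of_z]
  linear_combination ((1) * S19^2 * εA^2 + (1) * S19 * εA^3 * xA + (1) * S19 * εA^3 * yA
    + (-1) * S19 * εA^2 * xA + (-1) * S19 * εA^2 * yA + (1) * εA^3 * xA^2 + (1) * εA^3 * yA^2
    + (-1) * εA^2 * aA * xA * yA + (-1) * εA^2 * aA * xA * zA + (-1) * εA^2 * aA * yA * zA
    + (2) * εA^2 * zA^2 + (1) * εA * aA * xA * zA + (1) * εA * aA * yA * zA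
    + (-1) * aA^2 * zA^2) * hq + ((1) * εA^2 * xA^4 + (2) * εA^2 * xA^2 * yA^2
    + (1) * εA^2 * xA^2 * zA^2 + (2) * εA^2 * xA * yA * zA^2 + (1) * εA^2 * yA^4
    + (1) * εA^2 * yA^2 * zA^2 + (-2) * εA * aA * xA^3 * yA + (-1) * εA * aA * xA^3 * zA
    + (-1) * εA * aA * xA^2 * yA * zA + (-2) * εA * aA * xA * yA^3
    + (-1) * εA * aA * xA * yA^2 * zA + (-1) * εA * aA * yA^3 * zA
    + (-3) * εA * xA * yA * zA^2 + (1) * aA^2 * xA^2 * yA^2 + (1) * aA^2 * xA^2 * yA * zA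
    + (1) * aA^2 * xA * yA^2 * zA + (1) * aA * xA^3 * zA + (1) * aA * xA^2 * yA * zA
    + (1) * aA * xA * yA^2 * zA + (-1) * aA * xA * yA * zA^2 + (1) * aA * xA * zA^3
    + (1) * aA * yA^3 * zA + (1) * aA * yA * zA^3 + (1) * xA^4 + (2) * xA^2 * yA^2
    + (2) * xA^2 * zA^2 + (1) * xA * yA * zA^2 + (1) * yA^4 + (2) * yA^2 * zA^2
    + (1) * zA^4) * hεA + ((-1) * aA * xA^2 * yA * zA + (-1) * aA * xA^2 * zA^2
    + (-1) * aA * xA * yA^2 * zA + (-1) * aA * xA * yA * zA^2 + (-1) * aA * yA^2 * zA^2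
    + (-2) * xA^3 * yA + (-1) * xA^3 * zA + (-1) * xA^2 * yA * zA + (-2) * xA * yA^3
    + (-1) * xA * yA^2 * zA + (-2) * xA * yA * zA^2 + (-1) * xA * zA^3 + (-1) * yA^3 * zA
    + (-1) * yA * zA^3) * haA + ((1) * xA * yA * zA^2) * hcA

end Aux

set_option maxHeartbeats 1600000 in
/-- Over `R = ℤ[ε,a]/(ε²−1, (1+ε)a, (a−(1−ε))²(a+(1−ε)))`, in the universal
splitting algebra `A = R[x,y,z][S]/(S² − (1−ε)(x+y)S + (−ε(x²+y²)+axy))` with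
`S' = (1−ε)(x+y) − S`, the product
`(1 + (1−ε)(S+z)t + (−ε(S²+z²)+aSz)t²)(1 + (1−ε)(S'+z)t + (−ε(S'²+z²)+aS'z)t²)`
equals the displayed degree-4 polynomial in `t`. -/
theorem stmt_19 :
    (1 + Polynomial.C ((1 - εA) * (S19 + zA)) * Polynomial.X
        + Polynomial.C (-εA * (S19 ^ 2 + zA ^ 2) + aA * S19 * zA) * Polynomial.X ^ 2)
      * (1 + Polynomial.C ((1 - εA) * (S19' + zA)) * Polynomial.X
        + Polynomial.C (-εA * (S19' ^ 2 + zA ^ 2) + aA * S19' * zA) * Polynomial.X ^ 2)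
    = 1 + Polynomial.C (AdjoinRoot.of q19 (2 * (1 - cε) * (x19 + y19 + z19))) * Polynomial.X
      + Polynomial.C (AdjoinRoot.of q19 (2 * (1 - 2 * cε) * (x19 ^ 2 + y19 ^ 2 + z19 ^ 2)
          + (ca + 4) * (1 - cε) * (x19 * y19 + x19 * z19 + y19 * z19))) * Polynomial.X ^ 2
      + Polynomial.C (AdjoinRoot.of q19 (2 * (1 - cε) * (x19 ^ 3 + y19 ^ 3 + z19 ^ 3)
          + 2 * (1 - cε) * (1 + ca)
            * (x19 ^ 2 * y19 + x19 ^ 2 * z19 + y19 ^ 2 * x19 + y19 ^ 2 * z19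
              + z19 ^ 2 * x19 + z19 ^ 2 * y19)
          + 2 * (1 - cε) * (ca ^ 2 - ca + 4) * (x19 * y19 * z19))) * Polynomial.X ^ 3
      + Polynomial.C (AdjoinRoot.of q19 ((x19 ^ 4 + y19 ^ 4 + z19 ^ 4)
          + 2 * ca * (x19 ^ 3 * y19 + x19 ^ 3 * z19 + y19 ^ 3 * x19 + y19 ^ 3 * z19
              + z19 ^ 3 * x19 + z19 ^ 3 * y19)
          + (2 + ca ^ 2) * (x19 ^ 2 * y19 ^ 2 + x19 ^ 2 * z19 ^ 2 + y19 ^ 2 * z19 ^ 2)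
          + 2 * (ca ^ 2 + ca)
            * (x19 ^ 2 * y19 * z19 + x19 * y19 ^ 2 * z19 + x19 * y19 * z19 ^ 2)))
          * Polynomial.X ^ 4 := by
  rw [← A1, ← A2, ← A3, ← A4]
  simp only [map_add, map_mul, map_sub, map_one, map_neg, map_pow]
  ring
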